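/- Equivalence of the two definitions of conditional value-at-risk: let X be a nonnegative integrable real-valued random variable, t ∈ (0,1), and v = Quant_t(X) = inf{u ∈ ℝ : P(X ≤ u) ≥ t}. Then ∫_0^t Quant_s(X) ds = E[X · 1_{X < v}] + (t − P(X < v)) · v; equivalently, CVaR_t(X) = (1/t)∫_0^t Quant_s(X) ds = (1/t)(P(X < v) · E[X | X < v] + (t − P(X < v)) · v). -/

import Mathlib

open MeasureTheory Set Filter Topology

theorem cvar_integral_eq_conditional_form
    {Ω : Type*} [MeasurableSpace Ω] (μ : Measure Ω) [IsProbabilityMeasure μ]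
    (X : Ω → ℝ) (hX : Measurable X) (hX0 : 0 ≤ᵐ[μ] X) (hXint : Integrable X μ)
    (t : ℝ) (ht : t ∈ Set.Ioo (0 : ℝ) 1)
    (v : ℝ) (hv : v = sInf {u : ℝ | t ≤ (μ {ω | X ω ≤ u}).toReal}) :
    (∫ s in (0 : ℝ)..t, sInf {u : ℝ | s ≤ (μ {ω | X ω ≤ u}).toReal})
      = (∫ ω in {ω | X ω < v}, X ω ∂μ) + (t - (μ {ω | X ω < v}).toReal) * v := by
  obtain ⟨ht0, ht1⟩ := ht
  set F : ℝ → ℝ := fun u => (μ {ω | X ω ≤ u}).toReal with hFdef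
  set Q : ℝ → ℝ := fun s => sInf {u : ℝ | s ≤ F u} with hQdef
  -- Basic facts about F
  haveI hmap : IsProbabilityMeasure (μ.map X) := Measure.isProbabilityMeasure_map hX.aemeasurable
  have hFc : ∀ u, F u = ProbabilityTheory.cdf (μ.map X) u := by
    intro u
    rw [ProbabilityTheory.cdf_eq_real, measureReal_def, Measure.map_apply hX measurableSet_Iic]
    rfl
  have hFeq : F = fun u => ProbabilityTheory.cdf (μ.map X) u := funext hFc
  have hFmono : Monotone F := by rw [hFeq]; exact fun a b hab => (ProbabilityTheory.cdf (μ.map X)).mono hab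
  have hFrc : ∀ u, Tendsto F (𝓝[>] u) (𝓝 (F u)) := by
    intro u
    have h := (ProbabilityTheory.cdf (μ.map X)).right_continuous u
    rw [hFeq]
    exact h.tendsto.mono_left (nhdsWithin_mono _ Ioi_subset_Ici_self)
  have hFnonneg : ∀ u, 0 ≤ F u := fun u => ENNReal.toReal_nonneg
  have hFneg : ∀ u, u < 0 → F u = 0 := by
    intro u hu
    have h0 : μ {ω | ¬ (0:ℝ) ≤ X ω} = 0 := hX0
    have : μ {ω | X ω ≤ u} = 0 := by
      refine measure_mono_null (fun ω hω => ?_) h0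
      simp only [mem_setOf_eq, not_le] at *
      linarith
    simp [hFdef, this]
  have hFex : ∃ u, t ≤ F u := by
    have h := ProbabilityTheory.tendsto_cdf_atTop (μ.map X)
    obtain ⟨u, hu⟩ := (h.eventually (eventually_gt_nhds ht1)).exists
    exact ⟨u, by rw [hFc u]; exact hu.le⟩
  -- The sets S s
  have hSne : ∀ s, s ≤ t → Set.Nonempty {u : ℝ | s ≤ F u} :=
    fun s hs => hFex.imp (fun u hu => le_trans hs hu)
  have hSlb : ∀ s, 0 < s → ∀ u ∈ {u : ℝ | s ≤ F u}, (0:ℝ) ≤ u := by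
    intro s hs u hu
    by_contra h
    push_neg at h
    rw [mem_setOf_eq, hFneg u h] at hu
    linarith
  have hSbdd : ∀ s, 0 < s → BddBelow {u : ℝ | s ≤ F u} := fun s hs => ⟨0, hSlb s hs⟩
  -- Galois connection
  have hGal : ∀ s, 0 < s → s ≤ t → ∀ y, (Q s ≤ y ↔ s ≤ F y) := by
    intro s hs hst
    have hne := hSne s hst
    have hbdd := hSbdd s hs
    have hmem : s ≤ F (Q s) := by
      have hT : Tendsto F (𝓝[>] (Q s)) (𝓝 (F (Q s))) := hFrc _
      have hev : ∀ u ∈ Ioi (Q s), s ≤ F u := by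
        intro u hu
        obtain ⟨w, hw, hwu⟩ := exists_lt_of_csInf_lt hne hu
        exact le_trans hw (hFmono hwu.le)
      exact ge_of_tendsto hT (eventually_nhdsWithin_of_forall hev)
    intro y
    constructor
    · intro h; exact hmem.trans (hFmono h)
    · intro h; exact csInf_le hbdd h
  have hvQ : v = Q t := hv
  have hvGal : ∀ y, (v ≤ y ↔ t ≤ F y) := by rw [hvQ]; exact hGal t ht0 le_rfl
  have hv0 : (0:ℝ) ≤ v := by
    rw [hvQ]; exact le_csInf (hSne t le_rfl) (hSlb t ht0)
  have hQ0 : ∀ s ∈ Ioc (0:ℝ) t, 0 ≤ Q s := fun s hs => le_csInf (hSne s hs.2) (hSlb s hs.1)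
  have hQle : ∀ s ∈ Ioc (0:ℝ) t, Q s ≤ v := by
    intro s hs
    rw [hvQ]
    exact csInf_le_csInf (hSbdd s hs.1) (hSne t le_rfl) (fun u hu => le_trans hs.2 hu)
  -- the indicator extension g of Q
  set g : ℝ → ℝ := (Ioc (0:ℝ) t).indicator Q with hgdef
  have hgset : ∀ y : ℝ, {s : ℝ | g s ≤ y}
      = if 0 ≤ y then (Ioc (0:ℝ) t)ᶜ ∪ Ioc 0 (min (F y) t) else ∅ := by
    intro y
    ext s
    simp only [mem_setOf_eq]
    split_ifs with hy
    · constructor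
      · intro h
        by_cases hs : s ∈ Ioc (0:ℝ) t
        · right
          have h' : Q s ≤ y := by rwa [hgdef, indicator_of_mem hs] at h
          rw [hGal s hs.1 hs.2 y] at h'
          exact ⟨hs.1, le_min h' hs.2⟩
        · exact Or.inl hs
      · intro h
        rcases h with h | h
        · rw [hgdef, indicator_of_notMem h]; exact hy
        · have hs : s ∈ Ioc (0:ℝ) t := ⟨h.1, le_trans h.2 (min_le_right _ _)⟩
          rw [hgdef, indicator_of_mem hs]
          exact (hGal s hs.1 hs.2 y).2 (le_trans h.2 (min_le_left _ _))
    · push_neg at hy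
      simp only [mem_empty_iff_false, iff_false]
      intro h
      by_cases hs : s ∈ Ioc (0:ℝ) t
      · rw [hgdef, indicator_of_mem hs] at h
        have := (hGal s hs.1 hs.2 y).1 h
        rw [hFneg y hy] at this
        linarith [hs.1]
      · rw [hgdef, indicator_of_notMem hs] at h
        linarith
  have hgmeas : Measurable g := by
    apply measurable_of_Iic
    intro y
    have : g ⁻¹' Iic y = {s : ℝ | g s ≤ y} := rfl
    rw [this, hgset]
    split_ifs
    · exact (measurableSet_Ioc.compl.union measurableSet_Ioc)
    · exact MeasurableSet.empty
  haveI hfin : IsFiniteMeasure (volume.restrict (Ioc (0:ℝ) t)) :=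
    ⟨by rw [Measure.restrict_apply_univ]; exact measure_Ioc_lt_top⟩
  have hg0 : 0 ≤ᵐ[volume.restrict (Ioc (0:ℝ) t)] g := by
    refine Eventually.of_forall fun s => ?_
    by_cases hs : s ∈ Ioc (0:ℝ) t
    · rw [hgdef]; simp only [Pi.zero_apply]; rw [indicator_of_mem hs]; exact hQ0 s hs
    · rw [hgdef]; simp only [Pi.zero_apply]; rw [indicator_of_notMem hs]
  have hgint : Integrable g (volume.restrict (Ioc (0:ℝ) t)) := by
    refine Integrable.mono' (integrable_const v) hgmeas.aestronglyMeasurable ?_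
    refine Eventually.of_forall fun s => ?_
    rw [Real.norm_eq_abs]
    by_cases hs : s ∈ Ioc (0:ℝ) t
    · rw [hgdef, indicator_of_mem hs, abs_of_nonneg (hQ0 s hs)]; exact hQle s hs
    · rw [hgdef, indicator_of_notMem hs]; simpa using hv0
  -- LHS via layer cake
  have hLHS : (∫ s in (0:ℝ)..t, Q s) = ∫ s in Ioc (0:ℝ) t, g s := by
    rw [intervalIntegral.integral_of_le ht0.le]
    exact (setIntegral_congr_fun measurableSet_Ioc
      (fun s hs => (indicator_of_mem hs Q).symm))
  have hlay1 : (∫ s in Ioc (0:ℝ) t, g s)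
      = ∫ y in Ioi (0:ℝ), ((volume.restrict (Ioc (0:ℝ) t)) {s | y < g s}).toReal :=
    hgint.integral_eq_integral_meas_lt hg0
  have hmeas1 : ∀ y ∈ Ioi (0:ℝ), ((volume.restrict (Ioc (0:ℝ) t)) {s | y < g s}).toReal
      = (if y < v then t - F y else 0) := by
    intro y _
    have hset : {s : ℝ | y < g s} ∩ Ioc (0:ℝ) t = Ioc (F y) t := by
      ext s
      constructor
      · rintro ⟨h1, hs⟩
        have h1' : y < Q s := by rwa [mem_setOf_eq, hgdef, indicator_of_mem hs] at h1
        have h2 : ¬ (s ≤ F y) := fun hc => absurd ((hGal s hs.1 hs.2 y).2 hc) (not_le.mpr h1')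
        exact ⟨not_le.mp h2, hs.2⟩
      · intro hs
        have hs' : s ∈ Ioc (0:ℝ) t := ⟨lt_of_le_of_lt (hFnonneg y) hs.1, hs.2⟩
        refine ⟨?_, hs'⟩
        rw [mem_setOf_eq, hgdef, indicator_of_mem hs']
        by_contra hc
        push_neg at hc
        exact absurd ((hGal s hs'.1 hs'.2 y).1 hc) (not_le.mpr hs.1)
    rw [Measure.restrict_apply (measurableSet_lt measurable_const hgmeas), hset,
      Real.volume_Ioc]
    by_cases hyv : y < v
    · have hFyt : F y < t := by
        by_contra hc
        push_neg at hc
        exact absurd ((hvGal y).2 hc) (not_le.mpr hyv)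
      rw [if_pos hyv, ENNReal.toReal_ofReal (by linarith)]
    · push_neg at hyv
      have hFyt : t ≤ F y := (hvGal y).1 hyv
      rw [if_neg (not_lt.mpr hyv), ENNReal.ofReal_eq_zero.mpr (by linarith)]
      simp
  -- RHS via layer cake
  have hXv : MeasurableSet {ω | X ω < v} := measurableSet_lt hX measurable_const
  have hlay2 : (∫ ω in {ω | X ω < v}, X ω ∂μ)
      = ∫ y in Ioi (0:ℝ), ((μ.restrict {ω | X ω < v}) {ω | y < X ω}).toReal :=
    (hXint.restrict).integral_eq_integral_meas_lt (ae_restrict_of_ae hX0)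
  set P : ℝ := (μ {ω | X ω < v}).toReal with hPdef
  have hmeas2 : ∀ y ∈ Ioi (0:ℝ), ((μ.restrict {ω | X ω < v}) {ω | y < X ω}).toReal
      = (if y < v then P - F y else 0) := by
    intro y _
    rw [Measure.restrict_apply (measurableSet_lt measurable_const hX)]
    by_cases hyv : y < v
    · rw [if_pos hyv]
      have hsub : {ω | y < X ω} ∩ {ω | X ω < v} = {ω | X ω < v} \ {ω | X ω ≤ y} := by
        ext ω
        simp only [mem_inter_iff, mem_setOf_eq, mem_diff, not_le]
        tauto
      have hss : {ω | X ω ≤ y} ⊆ {ω | X ω < v} := fun ω hω => lt_of_le_of_lt hω hyv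
      rw [hsub, measure_diff hss ((hX measurableSet_Iic).nullMeasurableSet) (measure_ne_top μ _),
        ENNReal.toReal_sub_of_le (measure_mono hss) (measure_ne_top μ _)]
    · rw [if_neg hyv]
      push_neg at hyv
      have : {ω | y < X ω} ∩ {ω | X ω < v} = ∅ := by
        ext ω
        simp only [mem_inter_iff, mem_setOf_eq, mem_empty_iff_false, iff_false, not_and, not_lt]
        intro h
        linarith
      rw [this]
      simp
  -- combine
  have hPFy : ∀ y, y < v → F y ≤ P := by
    intro y hy
    exact ENNReal.toReal_mono (measure_ne_top μ _)
      (measure_mono (fun ω hω => lt_of_le_of_lt hω hy))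
  have hP1 : P ≤ 1 := by
    rw [hPdef]
    exact ENNReal.toReal_le_of_le_ofReal one_pos.le (by simpa using prob_le_one)
  have h2meas : Measurable fun y : ℝ => ((μ.restrict {ω | X ω < v}) {ω | y < X ω}).toReal := by
    apply Measurable.ennreal_toReal
    exact Antitone.measurable (fun a b hab => measure_mono (fun ω hω => lt_of_le_of_lt hab hω))
  have hindint1 : Integrable ((Iio v).indicator (fun _ => (1:ℝ))) (volume.restrict (Ioi 0)) := by
    rw [integrable_indicator_iff measurableSet_Iio]
    refine integrableOn_const (LT.lt.ne ?_)
    rw [Measure.restrict_apply measurableSet_Iio]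
    have hsub : Iio v ∩ Ioi (0:ℝ) ⊆ Ioo 0 v := fun x hx => ⟨hx.2, hx.1⟩
    exact lt_of_le_of_lt (measure_mono hsub)
      (by rw [Real.volume_Ioo]; exact ENNReal.ofReal_lt_top)
  have hindint : Integrable ((Iio v).indicator (fun _ => t - P)) (volume.restrict (Ioi 0)) := by
    rw [integrable_indicator_iff measurableSet_Iio]
    refine integrableOn_const (LT.lt.ne ?_)
    rw [Measure.restrict_apply measurableSet_Iio]
    have hsub : Iio v ∩ Ioi (0:ℝ) ⊆ Ioo 0 v := fun x hx => ⟨hx.2, hx.1⟩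
    exact lt_of_le_of_lt (measure_mono hsub)
      (by rw [Real.volume_Ioo]; exact ENNReal.ofReal_lt_top)
  have h2int : Integrable (fun y : ℝ => ((μ.restrict {ω | X ω < v}) {ω | y < X ω}).toReal)
      (volume.restrict (Ioi 0)) := by
    refine Integrable.mono' hindint1 h2meas.aestronglyMeasurable ?_
    filter_upwards [ae_restrict_mem measurableSet_Ioi] with y hy
    rw [Real.norm_eq_abs, hmeas2 y hy]
    by_cases hyv : y < v
    · rw [if_pos hyv, indicator_of_mem (mem_Iio.mpr hyv), abs_of_nonneg (by linarith [hPFy y hyv])]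
      linarith [hFnonneg y, hPFy y hyv]
    · rw [if_neg hyv, indicator_of_notMem (fun hc => hyv (mem_Iio.mp hc))]
      simp
  have hfinal : (∫ y in Ioi (0:ℝ), ((volume.restrict (Ioc (0:ℝ) t)) {s | y < g s}).toReal)
      = (∫ y in Ioi (0:ℝ), ((μ.restrict {ω | X ω < v}) {ω | y < X ω}).toReal) + (t - P) * v := by
    have hpt : ∀ y ∈ Ioi (0:ℝ), ((volume.restrict (Ioc (0:ℝ) t)) {s | y < g s}).toReal
        = (fun y => ((μ.restrict {ω | X ω < v}) {ω | y < X ω}).toReal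
            + (Iio v).indicator (fun _ => t - P) y) y := by
      intro y hy
      simp only
      rw [hmeas1 y hy, hmeas2 y hy]
      by_cases hyv : y < v
      · rw [if_pos hyv, if_pos hyv, indicator_of_mem (mem_Iio.mpr hyv)]; ring
      · rw [if_neg hyv, if_neg hyv, indicator_of_notMem (fun hc => hyv (mem_Iio.mp hc))]; ring
    rw [setIntegral_congr_fun measurableSet_Ioi hpt, integral_add h2int hindint]
    congr 1
    rw [integral_indicator measurableSet_Iio, setIntegral_const, measureReal_def,
      Measure.restrict_apply measurableSet_Iio]
    have hIoo : Iio v ∩ Ioi (0:ℝ) = Ioo 0 v := by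
      ext x
      exact ⟨fun h => ⟨h.2, h.1⟩, fun h => ⟨h.2, h.1⟩⟩
    rw [hIoo, Real.volume_Ioo, ENNReal.toReal_ofReal (by linarith), smul_eq_mul]
    ring
  rw [hLHS, hlay1, hfinal, hlay2]
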